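/- Let Θ : R^L → R be convex with nonempty zero-level set lev₀(Θ) := {a : Θ(a) ≤ 0}, let Θ'(a) denote a subgradient of Θ at a, and for λ ∈ (0,2) define the relaxed subgradient projection T(a) := a − λ·(Θ(a)/||Θ'(a)||²)·Θ'(a) if Θ(a) > 0 (with Θ'(a) ≠ 0), and T(a) := a otherwise. Then for every a ∈ R^L and every v ∈ lev₀(Θ), ((2−λ)/λ)·||a − T(a)||² ≤ ||a − v||² − ||T(a) − v||². -/

import Mathlib

open scoped RealInnerProductSpace

/-- The relaxed subgradient projection mapping associated with a convex
function `Θ` with nonempty zero-level set is `((2−λ)/λ)`-attracting with respect to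
`lev₀(Θ)`. -/
theorem subgradient_projection_attracting
    (L : ℕ) (Θ : EuclideanSpace ℝ (Fin L) → ℝ)
    (hconv : ConvexOn ℝ Set.univ Θ)
    (g : EuclideanSpace ℝ (Fin L) → EuclideanSpace ℝ (Fin L))
    (hsub : ∀ a w, ⟪w - a, g a⟫ + Θ a ≤ Θ w)
    (hlev : ∃ v, Θ v ≤ 0)
    (hg0 : ∀ a, 0 < Θ a → g a ≠ 0)
    (lam : ℝ) (hlam : 0 < lam ∧ lam < 2)
    (T : EuclideanSpace ℝ (Fin L) → EuclideanSpace ℝ (Fin L))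
    (hTpos : ∀ a, 0 < Θ a → T a = a - ((lam * Θ a / ‖g a‖ ^ 2) • g a))
    (hTnonpos : ∀ a, Θ a ≤ 0 → T a = a) :
    ∀ a, ∀ v, Θ v ≤ 0 →
      ((2 - lam) / lam) * ‖a - T a‖ ^ 2 ≤ ‖a - v‖ ^ 2 - ‖T a - v‖ ^ 2 := by

  intro a v hv
  rcases le_or_gt (Θ a) 0 with h | h
  · rw [hTnonpos a h]
    simp
  · have hg := hg0 a h
    have hgn : (0:ℝ) < ‖g a‖ ^ 2 := pow_pos (norm_pos_iff.mpr hg) 2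
    set c := lam * Θ a / ‖g a‖ ^ 2 with hc
    have hcpos : 0 < c := by
      apply div_pos _ hgn
      exact mul_pos hlam.1 h
    have hkey : c * ‖g a‖ ^ 2 = lam * Θ a := by
      rw [hc, div_mul_cancel₀ _ hgn.ne']
    have key : Θ a ≤ ⟪a - v, g a⟫ := by
      have h1 := hsub a v
      have h2 : ⟪a - v, g a⟫ = -⟪v - a, g a⟫ := by
        rw [← inner_neg_left, neg_sub]
      linarith
    have e1 : a - (a - c • g a) = c • g a := by abel
    have e2 : a - c • g a - v = (a - v) - c • g a := by abel
    have e4 : ‖a - v - c • g a‖ ^ 2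
        = ‖a - v‖ ^ 2 - 2 * (c * ⟪a - v, g a⟫) + ‖c • g a‖ ^ 2 := by
      rw [@norm_sub_sq_real, real_inner_smul_right]
    rw [hTpos a h, ← hc, e1, e2, e4]
    have e3 : ‖c • g a‖ ^ 2 = c ^ 2 * ‖g a‖ ^ 2 := by
      rw [norm_smul, mul_pow, Real.norm_eq_abs, sq_abs]
    rw [e3]
    rw [div_mul_eq_mul_div, div_le_iff₀ hlam.1]
    nlinarith [mul_le_mul_of_nonneg_left key (le_of_lt hcpos), sq_nonneg c]
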